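/- For ℓ ≥ 1, λ < λ₁, let θ(t) = 1+(λ₁-λ)|t|² and Ψ(t) = exp(-√θ(t))·|t|^{-(ℓ-1)/2} for t ∈ ℝ^ℓ \ {0}. Then -ΔΨ + (λ₁-λ)Ψ = Ψ·((λ₁-λ)θ^{-1} + (λ₁-λ)θ^{-3/2} + ((ℓ-1)/2)((ℓ-3)/2)|t|^{-2}). -/

import Mathlib

open Real

/-- Radial profile of `Ψ` in the variable `s = ‖t‖²`. -/
noncomputable def gg (μ p s : ℝ) : ℝ := Real.exp (-Real.sqrt (1 + μ * s)) * s ^ p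

/-- First derivative of `gg` in `s`. -/
noncomputable def gg1 (μ p s : ℝ) : ℝ :=
  Real.exp (-Real.sqrt (1 + μ * s)) *
    (-(μ / 2) * (Real.sqrt (1 + μ * s))⁻¹ * s ^ p + p * s ^ (p - 1))

/-- Second derivative of `gg` in `s`. -/
noncomputable def gg2 (μ p s : ℝ) : ℝ :=
  Real.exp (-Real.sqrt (1 + μ * s)) *
    (-(μ / 2) * (Real.sqrt (1 + μ * s))⁻¹ *
        (-(μ / 2) * (Real.sqrt (1 + μ * s))⁻¹ * s ^ p + p * s ^ (p - 1)) +
      (μ ^ 2 / 4 * ((Real.sqrt (1 + μ * s))⁻¹) ^ 3 * s ^ p +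
        -(μ / 2) * (Real.sqrt (1 + μ * s))⁻¹ * p * s ^ (p - 1) +
        p * (p - 1) * s ^ (p - 2)))

lemma sqrt_aux (μ s : ℝ) (hμ : 0 < μ) (hs : 0 < s) :
    HasDerivAt (fun s => Real.sqrt (1 + μ * s)) (μ / 2 * (Real.sqrt (1 + μ * s))⁻¹) s := by
  have hu : (0:ℝ) < 1 + μ * s := by positivity
  have h1 : HasDerivAt (fun s : ℝ => 1 + μ * s) μ s := by
    simpa using ((hasDerivAt_id s).const_mul μ).const_add 1
  have h2 := (Real.hasDerivAt_sqrt hu.ne').comp s h1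
  refine h2.congr_deriv ?_
  field_simp

lemma gg_deriv (μ p s : ℝ) (hμ : 0 < μ) (hs : 0 < s) :
    HasDerivAt (gg μ p) (gg1 μ p s) s := by
  have hu : (0:ℝ) < 1 + μ * s := by positivity
  have h3 := sqrt_aux μ s hμ hs
  have h4 : HasDerivAt (fun s => Real.exp (-Real.sqrt (1 + μ * s)))
      (Real.exp (-Real.sqrt (1 + μ * s)) * -(μ / 2 * (Real.sqrt (1 + μ * s))⁻¹)) s :=
    h3.neg.exp
  have h5 : HasDerivAt (fun s : ℝ => s ^ p) (p * s ^ (p - 1)) s :=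
    Real.hasDerivAt_rpow_const (Or.inl hs.ne')
  have := h4.mul h5
  unfold gg gg1
  refine this.congr_deriv ?_
  ring

lemma gg1_deriv (μ p s : ℝ) (hμ : 0 < μ) (hs : 0 < s) :
    HasDerivAt (gg1 μ p) (gg2 μ p s) s := by
  have hu : (0:ℝ) < 1 + μ * s := by positivity
  have hr0 : Real.sqrt (1 + μ * s) ≠ 0 := by positivity
  have h3 := sqrt_aux μ s hμ hs
  have h4 : HasDerivAt (fun s => Real.exp (-Real.sqrt (1 + μ * s)))
      (Real.exp (-Real.sqrt (1 + μ * s)) * -(μ / 2 * (Real.sqrt (1 + μ * s))⁻¹)) s :=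
    h3.neg.exp
  have h5 : HasDerivAt (fun s : ℝ => s ^ p) (p * s ^ (p - 1)) s :=
    Real.hasDerivAt_rpow_const (Or.inl hs.ne')
  have h5' : HasDerivAt (fun s : ℝ => s ^ (p - 1)) ((p - 1) * s ^ (p - 1 - 1)) s :=
    Real.hasDerivAt_rpow_const (Or.inl hs.ne')
  have h6 : HasDerivAt (fun s => (Real.sqrt (1 + μ * s))⁻¹)
      (-(μ / 2 * (Real.sqrt (1 + μ * s))⁻¹) / Real.sqrt (1 + μ * s) ^ 2) s := h3.inv hr0
  have hW : HasDerivAt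
      (fun s => -(μ / 2) * (Real.sqrt (1 + μ * s))⁻¹ * s ^ p + p * s ^ (p - 1))
      ((-(μ / 2) * (-(μ / 2 * (Real.sqrt (1 + μ * s))⁻¹) / Real.sqrt (1 + μ * s) ^ 2)) * s ^ p
        + (-(μ / 2) * (Real.sqrt (1 + μ * s))⁻¹) * (p * s ^ (p - 1))
        + p * ((p - 1) * s ^ (p - 1 - 1))) s :=
    ((h6.const_mul (-(μ / 2))).mul h5).add (h5'.const_mul p)
  have := h4.mul hW
  unfold gg1 gg2
  refine this.congr_deriv ?_
  have h7 : s ^ (p - 1 - 1) = s ^ (p - 2) := by ring_nf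
  rw [h7]
  ring

lemma alg (μ s L : ℝ) (hμ : 0 < μ) (hs : 0 < s) :
    -(4 * s * gg2 μ (-((L - 1) / 2) / 2) s + 2 * L * gg1 μ (-((L - 1) / 2) / 2) s)
        + μ * gg μ (-((L - 1) / 2) / 2) s
      = gg μ (-((L - 1) / 2) / 2) s *
        (μ * (1 + μ * s)⁻¹ + μ * (1 + μ * s) ^ (-(3:ℝ) / 2)
          + (L - 1) / 2 * ((L - 3) / 2) * s⁻¹) := by
  have hu : (0:ℝ) < 1 + μ * s := by positivity
  set p := -((L - 1) / 2) / 2 with hp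
  set r := Real.sqrt (1 + μ * s) with hrdef
  have hr0 : 0 < r := Real.sqrt_pos.mpr hu
  have hrel : r ^ 2 = 1 + μ * s := Real.sq_sqrt hu.le
  have h32 : (1 + μ * s) ^ (-(3:ℝ) / 2) = (r ^ 3)⁻¹ := by
    rw [← hrel, ← Real.rpow_natCast r 2, ← Real.rpow_mul hr0.le]
    norm_num
  have e1 : s ^ (p - 1) = s ^ p / s := by
    rw [Real.rpow_sub hs, Real.rpow_one]
  have e2 : s ^ (p - 2) = s ^ p / s ^ 2 := by
    rw [show p - 2 = p - 1 - 1 by ring, Real.rpow_sub hs, Real.rpow_sub hs, Real.rpow_one]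
    rw [div_div, sq]
  set E := Real.exp (-r) with hE
  set P := s ^ p with hP
  have hinv : (1 + μ * s)⁻¹ = (r ^ 2)⁻¹ := by rw [hrel]
  unfold gg gg1 gg2
  rw [← hrdef]
  rw [h32, e1, e2, hinv, ← hE, ← hP]
  field_simp
  ring_nf
  linear_combination (4 * E * P * s * μ * (1 + r)) * hrel

noncomputable def laplacian {ℓ : ℕ} (f : EuclideanSpace ℝ (Fin ℓ) → ℝ)
    (t : EuclideanSpace ℝ (Fin ℓ)) : ℝ :=
  ∑ i, fderiv ℝ (fun x => fderiv ℝ f x (EuclideanSpace.single i 1)) t (EuclideanSpace.single i 1)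

lemma laplacian_radial {ℓ : ℕ} (f f' f'' : ℝ → ℝ)
    (hf : ∀ s : ℝ, 0 < s → HasDerivAt f (f' s) s)
    (hf' : ∀ s : ℝ, 0 < s → HasDerivAt f' (f'' s) s)
    (t : EuclideanSpace ℝ (Fin ℓ)) (ht : t ≠ 0) :
    laplacian (fun x => f (‖x‖ ^ 2)) t
      = 4 * ‖t‖ ^ 2 * f'' (‖t‖ ^ 2) + 2 * ℓ * f' (‖t‖ ^ 2) := by
  have hts : 0 < ‖t‖ ^ 2 := by
    have : ‖t‖ ≠ 0 := norm_ne_zero_iff.mpr ht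
    positivity
  have hFD : ∀ x : EuclideanSpace ℝ (Fin ℓ), x ≠ 0 →
      HasFDerivAt (fun x => f (‖x‖ ^ 2)) (f' (‖x‖ ^ 2) • (2 • (innerSL ℝ x))) x := by
    intro x hx
    have hxs : 0 < ‖x‖ ^ 2 := by
      have : ‖x‖ ≠ 0 := norm_ne_zero_iff.mpr hx
      positivity
    exact (hf _ hxs).comp_hasFDerivAt x (hasStrictFDerivAt_norm_sq x).hasFDerivAt
  have hmem : {x : EuclideanSpace ℝ (Fin ℓ) | x ≠ 0} ∈ nhds t :=
    (isOpen_compl_singleton).mem_nhds ht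
  unfold laplacian
  have key : ∀ i, fderiv ℝ (fun x => fderiv ℝ (fun x => f (‖x‖ ^ 2)) x
        (EuclideanSpace.single i 1)) t (EuclideanSpace.single i 1)
      = f'' (‖t‖ ^ 2) * (2 * t i) * (2 * t i) + f' (‖t‖ ^ 2) * 2 := by
    intro i
    have hEq : (fun x => fderiv ℝ (fun x => f (‖x‖ ^ 2)) x (EuclideanSpace.single i 1))
        =ᶠ[nhds t] (fun x => f' (‖x‖ ^ 2) * (2 * x i)) := by
      filter_upwards [hmem] with x hx
      rw [(hFD x hx).fderiv]
      simp [real_inner_comm, EuclideanSpace.inner_single_left, EuclideanSpace.inner_single_right]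
    rw [hEq.fderiv_eq]
    have hc : HasFDerivAt (fun x : EuclideanSpace ℝ (Fin ℓ) => f' (‖x‖ ^ 2))
        (f'' (‖t‖ ^ 2) • (2 • (innerSL ℝ t))) t :=
      (hf' _ hts).comp_hasFDerivAt t (hasStrictFDerivAt_norm_sq t).hasFDerivAt
    have hd : HasFDerivAt (fun x : EuclideanSpace ℝ (Fin ℓ) => 2 * x i)
        ((2:ℝ) • (EuclideanSpace.proj i : EuclideanSpace ℝ (Fin ℓ) →L[ℝ] ℝ)) t :=
      (EuclideanSpace.proj i : EuclideanSpace ℝ (Fin ℓ) →L[ℝ] ℝ).hasFDerivAt.const_mul 2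
    rw [(show HasFDerivAt (fun x : EuclideanSpace ℝ (Fin ℓ) => f' (‖x‖ ^ 2) * (2 * x i)) _ t
      from hc.mul hd).fderiv]
    simp [real_inner_comm, EuclideanSpace.inner_single_left, EuclideanSpace.single_apply,
      EuclideanSpace.inner_single_right]
    ring
  rw [Finset.sum_congr rfl (fun i _ => key i), Finset.sum_add_distrib]
  have hsum : ∑ i, (t i) * (t i) = ‖t‖ ^ 2 := by
    rw [EuclideanSpace.norm_eq, Real.sq_sqrt (by positivity)]
    simp [sq]
  simp only [Finset.sum_const, Finset.card_univ, Fintype.card_fin, nsmul_eq_mul]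
  have h1 : ∑ x : Fin ℓ, f'' (‖t‖ ^ 2) * (2 * t x) * (2 * t x)
      = 4 * f'' (‖t‖ ^ 2) * ∑ x : Fin ℓ, t x * t x := by
    rw [Finset.mul_sum]
    exact Finset.sum_congr rfl fun x _ => by ring
  rw [h1, hsum]
  ring

theorem stmt_4 {ℓ : ℕ} (hℓ : 1 ≤ ℓ) (lam lam₁ : ℝ) (hlt : lam < lam₁)
    (θ : EuclideanSpace ℝ (Fin ℓ) → ℝ) (hθ : ∀ t, θ t = 1 + (lam₁ - lam) * ‖t‖ ^ 2)
    (Ψ : EuclideanSpace ℝ (Fin ℓ) → ℝ)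
    (hΨ : ∀ t, Ψ t = Real.exp (-Real.sqrt (θ t)) * ‖t‖ ^ (-(((ℓ : ℝ) - 1) / 2))) :
    ∀ t, t ≠ 0 →
      -laplacian Ψ t + (lam₁ - lam) * Ψ t =
        Ψ t * ((lam₁ - lam) * (θ t)⁻¹ + (lam₁ - lam) * (θ t) ^ (-(3 : ℝ) / 2) +
          (((ℓ : ℝ) - 1) / 2) * (((ℓ : ℝ) - 3) / 2) * (‖t‖ ^ 2)⁻¹) := by
  intro t ht
  have hμ : 0 < lam₁ - lam := by linarith
  have hts : 0 < ‖t‖ ^ 2 := by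
    have : ‖t‖ ≠ 0 := norm_ne_zero_iff.mpr ht
    positivity
  have hΨg : Ψ = fun x => gg (lam₁ - lam) (-(((ℓ : ℝ) - 1) / 2) / 2) (‖x‖ ^ 2) := by
    funext x
    rw [hΨ, hθ]
    unfold gg
    congr 1
    rw [← Real.rpow_natCast ‖x‖ 2, ← Real.rpow_mul (norm_nonneg x)]
    congr 1
    push_cast
    ring
  rw [hΨg]
  rw [laplacian_radial (gg (lam₁ - lam) (-(((ℓ : ℝ) - 1) / 2) / 2))
      (gg1 (lam₁ - lam) (-(((ℓ : ℝ) - 1) / 2) / 2))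
      (gg2 (lam₁ - lam) (-(((ℓ : ℝ) - 1) / 2) / 2))
      (fun s hs => gg_deriv _ _ s hμ hs) (fun s hs => gg1_deriv _ _ s hμ hs) t ht]
  rw [hθ]
  have := alg (lam₁ - lam) (‖t‖ ^ 2) (ℓ : ℝ) hμ hts
  convert this using 2 <;> ring
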